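/- If a channel P_{Y|X} satisfies ε-local differential privacy (P_{Y|X=x}(y)/P_{Y|X=x'}(y) ≤ e^ε for all y and all x,x' ∈ supp(P_X)), then for all y ∈ supp(P_Y), ℓ(X→y) ≤ log(1/(p_min + e^{−ε}(1−p_min))), where p_min = min_{x ∈ supp(P_X)} P_X(x). -/
import Mathlib


/-- ε-LDP implies ℓ(X→y) ≤ log(1/(p_min + e^{−ε}(1 − p_min))). -/
theorem stmt_14 {α β : Type*} [Fintype α] [Fintype β]
    (pX : α → ℝ) (hpX : ∀ x, 0 ≤ pX x) (hXsum : ∑ x, pX x = 1)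
    (W : α → β → ℝ) (hW : ∀ x y, 0 ≤ W x y) (hWsum : ∀ x, ∑ y, W x y = 1)
    (pY : β → ℝ) (hpY : ∀ y, pY y = ∑ x, W x y * pX x)
    (sX : Finset α) (hsX : ∀ x, x ∈ sX ↔ 0 < pX x) (hneX : sX.Nonempty)
    (ε : ℝ) (hε : 0 ≤ ε)
    (hLDP : ∀ y, ∀ x ∈ sX, ∀ x' ∈ sX, W x y ≤ Real.exp ε * W x' y) :
    ∀ y, 0 < pY y →
      Real.log (sX.sup' hneX fun x => W x y / pY y) ≤
        Real.log (1 / (sX.inf' hneX pX +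
          Real.exp (-ε) * (1 - sX.inf' hneX pX))) := by
  classical
  intro y hy
  obtain ⟨xs, hxs, hsup⟩ := Finset.exists_mem_eq_sup' hneX (fun x => W x y / pY y)
  obtain ⟨xi, hxi, hinf⟩ := Finset.exists_mem_eq_inf' hneX pX
  set I := sX.inf' hneX pX with hI
  have hIpos : 0 < I := by rw [hinf]; exact (hsX xi).mp hxi
  have hsX0 : ∀ x, x ∉ sX → pX x = 0 := fun x hx =>
    le_antisymm (not_lt.mp fun h => hx ((hsX x).mpr h)) (hpX x)
  have hSsum : ∑ x ∈ sX, pX x = 1 := by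
    rw [← hXsum]
    exact (Finset.sum_subset (Finset.subset_univ _) (fun x _ hx => hsX0 x hx))
  have hIle : I ≤ pX xs := Finset.inf'_le _ hxs
  have hepos : 0 < Real.exp (-ε) := Real.exp_pos _
  have he1 : Real.exp (-ε) ≤ 1 := Real.exp_le_one_iff.mpr (by linarith)
  have hIle1 : I ≤ 1 := by
    rw [hinf, ← hSsum]
    exact Finset.single_le_sum (fun x _ => hpX x) hxi
  have hD : 0 < I + Real.exp (-ε) * (1 - I) := by nlinarith
  have hWmax : ∀ x ∈ sX, Real.exp (-ε) * W xs y ≤ W x y := by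
    intro x hx
    have h1 := hLDP y xs hxs x hx
    have h2 : Real.exp (-ε) * W xs y ≤ Real.exp (-ε) * (Real.exp ε * W x y) :=
      mul_le_mul_of_nonneg_left h1 hepos.le
    rwa [← mul_assoc, ← Real.exp_add, neg_add_cancel, Real.exp_zero, one_mul] at h2
  have hbound : W xs y * (pX xs + Real.exp (-ε) * (1 - pX xs)) ≤ pY y := by
    rw [hpY]
    have h1 : ∑ x ∈ sX, W x y * pX x ≤ ∑ x, W x y * pX x :=
      Finset.sum_le_sum_of_subset_of_nonneg (Finset.subset_univ _)
        (fun x _ _ => mul_nonneg (hW x y) (hpX x))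
    refine le_trans ?_ h1
    rw [← Finset.add_sum_erase _ _ hxs]
    have h2 : ∑ x ∈ sX.erase xs, Real.exp (-ε) * W xs y * pX x ≤
        ∑ x ∈ sX.erase xs, W x y * pX x := by
      apply Finset.sum_le_sum
      intro x hx
      exact mul_le_mul_of_nonneg_right (hWmax x (Finset.mem_of_mem_erase hx)) (hpX x)
    have h3 : ∑ x ∈ sX.erase xs, pX x = 1 - pX xs := by
      rw [Finset.sum_erase_eq_sub hxs, hSsum]
    have h4 : W xs y * (pX xs + Real.exp (-ε) * (1 - pX xs))
        = W xs y * pX xs + ∑ x ∈ sX.erase xs, Real.exp (-ε) * W xs y * pX x := by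
      rw [show (fun x => Real.exp (-ε) * W xs y * pX x)
            = (fun x => Real.exp (-ε) * W xs y * pX x) from rfl,
          ← Finset.mul_sum, h3]
      ring
    rw [h4]
    linarith
  have hx0 : ∃ x0, 0 < W x0 y * pX x0 := by
    by_contra h
    push_neg at h
    have : pY y ≤ 0 := by
      rw [hpY]; exact Finset.sum_nonpos (fun x _ => h x)
    linarith
  obtain ⟨x0, hx0⟩ := hx0
  have hWx0 : 0 < W x0 y ∧ 0 < pX x0 := by
    rcases mul_pos_iff.mp hx0 with ⟨h1, h2⟩ | ⟨h1, h2⟩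
    · exact ⟨h1, h2⟩
    · exact absurd h1 (not_lt.mpr (hW x0 y))
  have hle0 : W x0 y / pY y ≤ W xs y / pY y := by
    rw [← hsup]
    exact Finset.le_sup' (fun x => W x y / pY y) ((hsX x0).mpr hWx0.2)
  have hsuppos : 0 < W xs y / pY y :=
    lt_of_lt_of_le (div_pos hWx0.1 hy) hle0
  have hfin : W xs y / pY y ≤ 1 / (I + Real.exp (-ε) * (1 - I)) := by
    rw [div_le_div_iff₀ hy hD]
    have hmono : W xs y * (I + Real.exp (-ε) * (1 - I)) ≤
        W xs y * (pX xs + Real.exp (-ε) * (1 - pX xs)) := by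
      apply mul_le_mul_of_nonneg_left _ (hW xs y)
      nlinarith
    linarith
  rw [hsup]
  exact Real.log_le_log hsuppos hfin
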